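/- Let L ⊂ ℤⁿ be a subgroup of rank ℓ ≥ 1 and let σ₁,…,σₙ ∈ ℤⁿ be vectors such that none of the linear forms x ↦ ⟨x,σⱼ⟩ vanishes identically on L. If the orthogonal projections of σ₁,…,σₙ to L⊗ℝ span a subspace of dimension ℓ, then the series ∑'_{x∈L} 1/(⟨x,σ₁⟩^{e₁}···⟨x,σₙ⟩^{eₙ}) converges absolutely whenever all eⱼ ≥ 2, where the primed sum omits x for which some ⟨x,σⱼ⟩ = 0. -/

import Mathlib

lemma aux_summable_pi (n : ℕ) (h : ℤ → ℝ) (hh : Summable h) (h0 : ∀ m, 0 ≤ h m) :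
    Summable (fun y : Fin n → ℤ => ∏ j, h (y j)) := by
  induction n with
  | zero => exact .of_finite
  | succ n ih =>
      have H := hh.mul_of_nonneg ih h0 (fun y => Finset.prod_nonneg fun j _ => h0 _)
      exact ((Fin.consEquiv (fun _ : Fin (n+1) => ℤ)).symm.summable_iff.2 H).congr
        fun y => by simp [Fin.prod_univ_succ, Fin.consEquiv, Fin.tail]

/-- Absolute convergence of generalized Dedekind sums with all exponents `≥ 2`:
if `L ⊆ ℤⁿ` is the lattice spanned by `ℓ ≥ 1` linearly independent vectors,
none of the linear forms `⟨·, σⱼ⟩` vanishes identically on `L`, and the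
orthogonal projections of the `σⱼ` onto `L ⊗ ℝ` span a subspace of dimension
`ℓ`, then `∑'_{x ∈ L} 1/(⟨x,σ₁⟩^{e₁} ⋯ ⟨x,σₙ⟩^{eₙ})`, omitting terms with
vanishing denominator, converges absolutely. -/
theorem stmt13 (n ℓ : ℕ) (hℓ : 1 ≤ ℓ)
    (B : Fin ℓ → (Fin n → ℤ)) (hB : LinearIndependent ℤ B)
    (L : Submodule ℤ (Fin n → ℤ)) (hL : L = Submodule.span ℤ (Set.range B))
    (σ : Fin n → (Fin n → ℤ))
    (e : Fin n → ℕ) (he : ∀ j, 2 ≤ e j)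
    (hnv : ∀ j, ∃ x ∈ L, (∑ i, x i * σ j i) ≠ 0)
    (V : Submodule ℝ (EuclideanSpace ℝ (Fin n)))
    (hV : V = Submodule.span ℝ
      (Set.range fun k => (WithLp.toLp 2 (fun i => ((B k i : ℝ))) : EuclideanSpace ℝ (Fin n))))
    (hproj : Module.finrank ℝ (Submodule.span ℝ
      (Set.range fun j => ((Submodule.orthogonalProjection V
        (WithLp.toLp 2 (fun i => ((σ j i : ℝ))) : EuclideanSpace ℝ (Fin n)) : V) :
          EuclideanSpace ℝ (Fin n)))) = ℓ) :
    Summable (fun x : L =>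
      if ∀ j, (∑ i, (x : Fin n → ℤ) i * σ j i) ≠ 0 then
        |1 / ∏ j, ((∑ i, (x : Fin n → ℤ) i * σ j i : ℤ) : ℝ) ^ (e j)|
      else 0) := by
  classical
  -- the cast map ℤⁿ → ℝⁿ as a ℤ-linear map
  set c : (Fin n → ℤ) →ₗ[ℤ] EuclideanSpace ℝ (Fin n) :=
    { toFun := fun x => WithLp.toLp 2 (fun i => (x i : ℝ))
      map_add' := by intro a b; ext i; simp
      map_smul' := by intro m a; ext i; simp } with hc
  set W : Submodule ℝ (EuclideanSpace ℝ (Fin n)) := Submodule.span ℝ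
      (Set.range fun j => ((Submodule.orthogonalProjection V
        (WithLp.toLp 2 (fun i => ((σ j i : ℝ))) : EuclideanSpace ℝ (Fin n)) : V) :
          EuclideanSpace ℝ (Fin n))) with hW
  -- W = V
  have hWV : W ≤ V := by
    rw [hW, Submodule.span_le]
    rintro _ ⟨j, rfl⟩
    exact SetLike.coe_mem _
  have hVle : Module.finrank ℝ V ≤ ℓ := by
    rw [hV]
    simpa [Set.finrank] using finrank_range_le_card
      (fun k => (WithLp.toLp 2 (fun i => ((B k i : ℝ))) : EuclideanSpace ℝ (Fin n)))
  have hWeq : W = V := Submodule.eq_of_le_of_finrank_le hWV (by rw [hproj]; exact hVle)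
  -- key: the forms jointly vanish only at 0 on L
  have key : ∀ x ∈ L, (∀ j, (∑ i, x i * σ j i) = 0) → x = 0 := by
    intro x hx hz
    have hXV : c x ∈ V := by
      have h1 : Submodule.map c L ≤ V.restrictScalars ℤ := by
        rw [hL, Submodule.map_span, Submodule.span_le, hV]
        rintro _ ⟨_, ⟨k, rfl⟩, rfl⟩
        exact Submodule.subset_span ⟨k, rfl⟩
      exact h1 ⟨x, hx, rfl⟩
    have hinner : ∀ j, inner (𝕜 := ℝ) (c x)
        (WithLp.toLp 2 (fun i => ((σ j i : ℝ))) : EuclideanSpace ℝ (Fin n)) = 0 := by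
      intro j
      rw [PiLp.inner_apply]
      have : (((∑ i, x i * σ j i : ℤ)) : ℝ) = 0 := by rw [hz j]; simp
      push_cast at this
      simpa [hc, mul_comm] using this
    have hperp : ∀ j, inner (𝕜 := ℝ) (c x) (((Submodule.orthogonalProjection V
        (WithLp.toLp 2 (fun i => ((σ j i : ℝ))) : EuclideanSpace ℝ (Fin n)) : V) :
          EuclideanSpace ℝ (Fin n))) = 0 := by
      intro j
      set s : EuclideanSpace ℝ (Fin n) := WithLp.toLp 2 (fun i => ((σ j i : ℝ)))
      have h2 : inner (𝕜 := ℝ) (c x)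
          (s - (Submodule.orthogonalProjection V s : EuclideanSpace ℝ (Fin n))) = 0 :=
        (Submodule.mem_orthogonal V _).1 (Submodule.sub_starProjection_mem_orthogonal s) _ hXV
      rw [inner_sub_right] at h2
      rw [← hinner j]
      linarith
    have hXW : ∀ w ∈ W, inner (𝕜 := ℝ) (c x) w = 0 := by
      intro w hw
      induction hw using Submodule.span_induction with
      | mem w hw => obtain ⟨j, rfl⟩ := hw; exact hperp j
      | zero => simp
      | add u v _ _ hu hv => rw [inner_add_right, hu, hv, add_zero]
      | smul a u _ hu => rw [inner_smul_right, hu, mul_zero]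
    have hX0 : c x = 0 := by
      have := hXW (c x) (hWeq ▸ hXV)
      exact inner_self_eq_zero.1 this
    funext i
    have : ((x i : ℝ)) = 0 := by simpa [hc] using congrArg (fun v => v i) hX0
    exact_mod_cast this
  -- injectivity of the joint form map on L
  have inj : Function.Injective
      (fun x : L => (fun j => ∑ i, (x : Fin n → ℤ) i * σ j i : Fin n → ℤ)) := by
    intro a b hab
    have hz : ∀ j, (∑ i, ((a : Fin n → ℤ) - (b : Fin n → ℤ)) i * σ j i) = 0 := by
      intro j
      have := congrFun hab j
      simp only [Pi.sub_apply, sub_mul, Finset.sum_sub_distrib]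
      simpa using sub_eq_zero_of_eq this
    have := key _ (sub_mem a.2 b.2) hz
    exact Subtype.ext (sub_eq_zero.1 this)
  -- comparison
  have hg : Summable (fun y : Fin n → ℤ => ∏ j, (1 / ((y j : ℝ))^2)) :=
    aux_summable_pi n (fun m => 1 / ((m : ℝ))^2)
      (Real.summable_one_div_int_pow.2 one_lt_two)
      (fun m => by positivity)
  have hcomp : Summable (fun x : L =>
      ∏ j, (1 / (((∑ i, (x : Fin n → ℤ) i * σ j i : ℤ) : ℝ))^2)) :=
    hg.comp_injective inj
  refine hcomp.of_nonneg_of_le (fun x => by positivity) (fun x => ?_)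
  by_cases hx : ∀ j, (∑ i, (x : Fin n → ℤ) i * σ j i) ≠ 0
  · rw [if_pos hx, abs_div, abs_one, Finset.abs_prod]
    have h1 : ∀ j, (1:ℝ) ≤ |((∑ i, (x : Fin n → ℤ) i * σ j i : ℤ) : ℝ)| := by
      intro j
      rw [← Int.cast_abs]
      exact_mod_cast Int.one_le_abs (hx j)
    simp only [abs_pow]
    rw [one_div, ← Finset.prod_inv_distrib]
    refine Finset.prod_le_prod (fun j _ => by positivity) (fun j _ => ?_)
    rw [one_div, ← sq_abs]
    have h2 := h1 j
    exact inv_anti₀ (by nlinarith) (pow_le_pow_right₀ (h1 j) (he j))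
  · rw [if_neg hx]
    positivity
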